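/- If L is an odd positive integer, the geometric series S(x) = \sum_{l=0}^{L} x^l is monotonically increasing on the interval (-\infty, 0]. -/

import Mathlib

lemma deriv_geom_identity (n : ℕ) (x : ℝ) :
    (x - 1) ^ 2 * ∑ j ∈ Finset.range n, (j + 1 : ℝ) * x ^ j
      = n * x ^ (n + 1) - (n + 1) * x ^ n + 1 := by
  induction n with
  | zero => simp
  | succ n ih =>
    rw [Finset.sum_range_succ, mul_add, ih]
    push_cast
    ring

/-- If `L` is an odd positive integer, the geometric series
`S(x) = ∑_{l=0}^{L} x^l` is monotonically increasing on `(-∞, 0]`. -/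
theorem stmt_0 (L : ℕ) (hL : Odd L) (hL1 : 1 ≤ L) :
    StrictMonoOn (fun x : ℝ => ∑ l ∈ Finset.range (L + 1), x ^ l) (Set.Iic 0) := by
  apply strictMonoOn_of_deriv_pos (convex_Iic 0)
  · exact Continuous.continuousOn (by continuity)
  · intro x hx
    rw [interior_Iic] at hx
    have hx' : x < 0 := hx
    have hderiv : HasDerivAt (fun x : ℝ => ∑ l ∈ Finset.range (L + 1), x ^ l)
        (∑ l ∈ Finset.range (L + 1), (l : ℝ) * x ^ (l - 1)) x :=
      HasDerivAt.fun_sum fun l _ => hasDerivAt_pow l x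
    rw [hderiv.deriv]
    have hre : (∑ l ∈ Finset.range (L + 1), (l : ℝ) * x ^ (l - 1))
        = ∑ j ∈ Finset.range L, (j + 1 : ℝ) * x ^ j := by
      rw [Finset.sum_range_succ']
      simp
    rw [hre]
    have h1 : (0:ℝ) < (x - 1) ^ 2 := by
      have : x - 1 ≠ 0 := by linarith
      positivity
    have h2 : (0:ℝ) ≤ x ^ (L + 1) := (hL.add_one).pow_nonneg x
    have h3 : x ^ L ≤ 0 := hL.pow_nonpos hx'.le
    have key := deriv_geom_identity L x
    have hLpos : (0:ℝ) ≤ (L:ℝ) := Nat.cast_nonneg L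
    nlinarith [mul_nonneg hLpos h2, mul_nonpos_of_nonneg_of_nonpos (by positivity : (0:ℝ) ≤ (L:ℝ)+1) h3]
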